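/- Let p > q > 0 be coprime integers with Bezout chain (p₀, q₀), …, (p_n, q_n), set dᵢ = p_{i−1} − pᵢ for 1 ≤ i ≤ n, and let r₀, …, r_k be integers with rᵢ ≤ −2 for all i and [r₀, …, r_k]⁻ = −p/q. Then the number of distinct integers of the form Σ_{i=1}^{n} εᵢ dᵢ, as ε ranges over all functions {1, …, n} → {+1, −1}, equals |(r₀ + 1)(r₁ + 1) ⋯ (r_{k−1} + 1) · r_k|. -/

import Mathlib

/-- Negative continued fraction value `[r₀, …, r_k]⁻`:
`[r_k]⁻ = r_k` and `[r_j, …, r_k]⁻ = r_j − 1/[r_{j+1}, …, r_k]⁻`. -/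
def ncf : List ℤ → ℚ
  | [] => 0
  | [r] => (r : ℚ)
  | r :: rest => (r : ℚ) - 1 / ncf rest

/-- `(p′, q′)` is the Bezout successor of `(p, q)`:
`p q′ − q p′ = 1`, `0 < p′ < p`, `0 < q′ ≤ q`. -/
def BezoutNext (p q p' q' : ℤ) : Prop :=
  p * q' - q * p' = 1 ∧ 0 < p' ∧ p' < p ∧ 0 < q' ∧ q' ≤ q

/-- `P 0 = (p, q), …, P n = (1, 1)` is the Bezout chain of `(p, q)`: each step
is the Bezout successor, and `(1, 1)` is reached exactly at step `n`. -/
def IsBezoutChain (p q : ℤ) (n : ℕ) (P : ℕ → ℤ × ℤ) : Prop :=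
  P 0 = (p, q) ∧ P n = (1, 1) ∧ (∀ i < n, P i ≠ (1, 1)) ∧
  ∀ i < n, BezoutNext (P i).1 (P i).2 (P (i + 1)).1 (P (i + 1)).2

namespace Stmt10Aux


/-- continuant numerator sequence: `cnU a (j+1) = K(a_0 … a_{j-1})`. -/
def cnU (a : ℕ → ℤ) : ℕ → ℤ
  | 0 => 0
  | 1 => 1
  | (j+2) => a j * cnU a (j+1) - cnU a j

/-- continuant denominator sequence: `cnV a (j+2) = K(a_1 … a_j)`. -/
def cnV (a : ℕ → ℤ) : ℕ → ℤ
  | 0 => -1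
  | 1 => 0
  | (j+2) => a j * cnV a (j+1) - cnV a j

variable {a : ℕ → ℤ}

lemma cnU_mono (ha : ∀ l, 2 ≤ a l) : ∀ j, 0 ≤ cnU a j ∧ cnU a j < cnU a (j+1) := by
  intro j
  induction j with
  | zero => simp [cnU]
  | succ j ih =>
    have h := ha j
    constructor
    · linarith [ih.1, ih.2]
    · show cnU a (j+1) < a j * cnU a (j+1) - cnU a j
      nlinarith [ih.1, ih.2]

lemma cnV_mono (ha : ∀ l, 2 ≤ a l) : ∀ j, -1 ≤ cnV a j ∧ cnV a j < cnV a (j+1) := by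
  intro j
  induction j with
  | zero => simp [cnV]
  | succ j ih =>
    have h := ha j
    constructor
    · linarith [ih.1, ih.2]
    · show cnV a (j+1) < a j * cnV a (j+1) - cnV a j
      nlinarith [ih.1, ih.2]

lemma cnW_mono (ha : ∀ l, 2 ≤ a l) :
    ∀ j, 1 ≤ cnU a j - cnV a j ∧ cnU a j - cnV a j ≤ cnU a (j+1) - cnV a (j+1) := by
  intro j
  induction j with
  | zero => simp [cnU, cnV]
  | succ j ih =>
    have h := ha j
    constructor
    · linarith [ih.1, ih.2]
    · show cnU a (j+1) - cnV a (j+1) ≤ (a j * cnU a (j+1) - cnU a j) - (a j * cnV a (j+1) - cnV a j)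
      nlinarith [ih.1, ih.2]

lemma cnDet : ∀ j, cnU a j * cnV a (j+1) - cnU a (j+1) * cnV a j = 1 := by
  intro j
  induction j with
  | zero => simp [cnU, cnV]
  | succ j ih =>
    show cnU a (j+1) * (a j * cnV a (j+1) - cnV a j) -
      (a j * cnU a (j+1) - cnU a j) * cnV a (j+1) = 1
    linear_combination ih

lemma cnSig (ha : ∀ l, 2 ≤ a l) :
    ∀ j, ∑ l ∈ Finset.range j, (a l - 2) * cnU a (l+1) = cnU a (j+1) - cnU a j - 1 := by
  intro j
  induction j with
  | zero => simp [cnU]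
  | succ j ih =>
    rw [Finset.sum_range_succ, ih]
    show _ = (a j * cnU a (j+1) - cnU a j) - cnU a (j+1) - 1
    ring





lemma cnU_one_le (ha : ∀ l, 2 ≤ a l) (j : ℕ) : 1 ≤ cnU a (j+1) := by
  have h := cnU_mono ha j
  omega

lemma cnZero (ha : ∀ l, 2 ≤ a l) :
    ∀ j, ∀ f : ℕ → ℤ, (∀ l < j, |f l| ≤ a l - 2) →
    ∑ l ∈ Finset.range (j+1), 2 * f l * cnU a (l+1) = 0 → ∀ l ≤ j, f l = 0 := by
  intro j
  induction j with
  | zero =>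
    intro f _ hsum l hl
    interval_cases l
    have : 2 * f 0 * cnU a 1 = 0 := by simpa using hsum
    simp [cnU] at this
    omega
  | succ j ih =>
    intro f hb hsum
    have hrs : ∑ l ∈ Finset.range (j+1), 2 * f l * cnU a (l+1)
        + 2 * f (j+1) * cnU a (j+2) = 0 := by
      rw [← Finset.sum_range_succ]; exact hsum
    have habs : |∑ l ∈ Finset.range (j+1), 2 * f l * cnU a (l+1)|
        ≤ 2 * (cnU a (j+2) - cnU a (j+1) - 1) := by
      calc |∑ l ∈ Finset.range (j+1), 2 * f l * cnU a (l+1)|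
          ≤ ∑ l ∈ Finset.range (j+1), |2 * f l * cnU a (l+1)| :=
            Finset.abs_sum_le_sum_abs _ _
        _ ≤ ∑ l ∈ Finset.range (j+1), 2 * (a l - 2) * cnU a (l+1) := by
            apply Finset.sum_le_sum
            intro l hl
            have hl' : l < j + 1 := Finset.mem_range.mp hl
            have hU' : 0 ≤ cnU a (l+1) := by have := cnU_mono ha l; omega
            rw [abs_mul, abs_mul, abs_of_nonneg hU']
            have hf : |f l| ≤ a l - 2 := hb l hl'
            have h2 : |(2:ℤ)| = 2 := by norm_num
            rw [h2]
            nlinarith [abs_nonneg (f l)]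
        _ = 2 * (cnU a (j+2) - cnU a (j+1) - 1) := by
            rw [← cnSig ha (j+1), Finset.mul_sum]
            exact Finset.sum_congr rfl fun l _ => by ring
    have htop : f (j+1) = 0 := by
      by_contra hne
      have h1 : 1 ≤ |f (j+1)| := abs_pos.mpr hne
      have hUpos : 0 ≤ cnU a (j+2) := (cnU_mono ha (j+1)).1.trans (cnU_mono ha (j+1)).2.le
      have hU1 : 1 ≤ cnU a (j+1) := cnU_one_le ha j
      have heq : |2 * f (j+1) * cnU a (j+2)|
          = |∑ l ∈ Finset.range (j+1), 2 * f l * cnU a (l+1)| := by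
        rw [show ∑ l ∈ Finset.range (j+1), 2 * f l * cnU a (l+1)
            = -(2 * f (j+1) * cnU a (j+2)) by linarith, abs_neg]
      have hlow : 2 * cnU a (j+2) ≤ |2 * f (j+1) * cnU a (j+2)| := by
        rw [abs_mul, abs_mul, abs_of_nonneg hUpos]
        have h2 : |(2:ℤ)| = 2 := by norm_num
        rw [h2]
        nlinarith
      rw [heq] at hlow
      linarith
    intro l hl
    rcases Nat.lt_succ_iff_lt_or_eq.mp (Nat.lt_succ_of_le hl) with h | h
    · apply ih f (fun l hl => hb l (by omega)) _ l (by omega)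
      rw [Finset.sum_range_succ] at hsum
      rw [htop] at hsum
      simpa using hsum
    · rw [h]; exact htop






lemma cnShift : ∀ j, cnU a (j+2) = a 0 * cnU (fun i => a (i+1)) (j+1) - cnV (fun i => a (i+1)) (j+1)
    ∧ cnV a (j+2) = cnU (fun i => a (i+1)) (j+1) := by
  have base0 : cnU a 2 = a 0 * cnU (fun i => a (i+1)) 1 - cnV (fun i => a (i+1)) 1
      ∧ cnV a 2 = cnU (fun i => a (i+1)) 1 := by
    constructor <;> simp [cnU, cnV]
  have base1 : cnU a 3 = a 0 * cnU (fun i => a (i+1)) 2 - cnV (fun i => a (i+1)) 2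
      ∧ cnV a 3 = cnU (fun i => a (i+1)) 2 := by
    constructor <;> simp [cnU, cnV] <;> ring
  intro j
  induction j using Nat.twoStepInduction with
  | zero => exact base0
  | one => exact base1
  | more j ih1 ih2 =>
    constructor
    · show a (j+2) * cnU a (j+3) - cnU a (j+2) = a 0 * cnU (fun i => a (i+1)) (j+3)
        - cnV (fun i => a (i+1)) (j+3)
      have e1 : cnU (fun i => a (i+1)) (j+3)
          = a (j+2) * cnU (fun i => a (i+1)) (j+2) - cnU (fun i => a (i+1)) (j+1) := rfl
      have e2 : cnV (fun i => a (i+1)) (j+3)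
          = a (j+2) * cnV (fun i => a (i+1)) (j+2) - cnV (fun i => a (i+1)) (j+1) := rfl
      rw [e1, e2, ih2.1, ih1.1]
      ring
    · show a (j+2) * cnV a (j+3) - cnV a (j+2) = cnU (fun i => a (i+1)) (j+3)
      have e1 : cnU (fun i => a (i+1)) (j+3)
          = a (j+2) * cnU (fun i => a (i+1)) (j+2) - cnU (fun i => a (i+1)) (j+1) := rfl
      rw [e1, ih2.2, ih1.2]

lemma ncf_cons (x y : ℤ) (t : List ℤ) : ncf (x :: y :: t) = (x : ℚ) - 1 / ncf (y :: t) := rfl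

lemma cnVal : ∀ k : ℕ, ∀ r a : ℕ → ℤ, (∀ l, 2 ≤ a l) → (∀ i ≤ k, a i = - r i) →
    ncf (List.ofFn fun i : Fin (k + 1) => r i.1)
      = -(cnU a (k+2) : ℚ) / (cnV a (k+2) : ℚ) := by
  intro k
  induction k with
  | zero =>
    intro r a ha har
    have : (List.ofFn fun i : Fin 1 => r i.1) = [r 0] := by
      simp only [List.ofFn_succ, List.ofFn_zero]
      rfl
    rw [this]
    show (r 0 : ℚ) = _
    have h0 : a 0 = - r 0 := har 0 (by omega)
    have hU : cnU a 2 = a 0 := by simp [cnU]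
    have hV : cnV a 2 = 1 := by simp [cnV]
    rw [hU, hV, h0]
    push_cast
    ring
  | succ k ih =>
    intro r a ha har
    have hofn : (List.ofFn fun i : Fin (k+2) => r i.1)
        = r 0 :: (List.ofFn fun i : Fin (k+1) => r (i.1+1)) := by
      rw [List.ofFn_succ]
      rfl
    have htail := ih (fun i => r (i+1)) (fun i => a (i+1)) (fun l => ha (l+1))
      (fun i hi => har (i+1) (by omega))
    -- tail is nonempty: it's ofFn of size k+1
    have htne : (List.ofFn fun i : Fin (k+1) => r (i.1+1)) ≠ [] := by
      simp [List.ofFn_eq_nil_iff]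
    have htail' : ncf (List.ofFn fun i : Fin (k+1) => r (i.1+1))
        = -(cnU (fun i => a (i+1)) (k+2) : ℚ) / (cnV (fun i => a (i+1)) (k+2) : ℚ) := htail
    obtain ⟨y, t, hyt⟩ := List.exists_cons_of_ne_nil htne
    rw [hofn, hyt, ncf_cons, ← hyt, htail']
    set a' : ℕ → ℤ := fun i => a (i+1) with ha'
    have ha' : ∀ l, 2 ≤ a' l := fun l => ha (l+1)
    have hUpos : 0 < cnU a' (k+2) :=
      lt_of_le_of_lt (cnU_mono ha' (k+1)).1 (cnU_mono ha' (k+1)).2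
    have hVpos : 0 < cnV a' (k+2) := by
      have h1 := (cnV_mono ha' (k+1)).2
      have h0 := (cnV_mono ha' k).1
      have h0' := (cnV_mono ha' k).2
      have : (0:ℤ) ≤ cnV a' (k+1) := by omega
      exact lt_of_le_of_lt this h1
    have hUQ : (cnU a' (k+2) : ℚ) ≠ 0 := by exact_mod_cast hUpos.ne'
    have hVQ : (cnV a' (k+2) : ℚ) ≠ 0 := by exact_mod_cast hVpos.ne'
    have hS := cnShift (a := a) (k+1)
    rw [hS.1, hS.2]
    have h0 : a 0 = - r 0 := har 0 (by omega)
    have hr0 : (r 0 : ℚ) = -(a 0 : ℚ) := by rw [h0]; push_cast; ring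
    rw [hr0, one_div_div, div_neg, sub_neg_eq_add, eq_div_iff hUQ, add_mul,
      div_mul_cancel₀ _ hUQ]
    push_cast
    ring




lemma bezout_unique {p q x y x' y' : ℤ} (h : BezoutNext p q x y)
    (h' : BezoutNext p q x' y') : x = x' ∧ y = y' := by
  obtain ⟨hd, hx0, hxp, hy0, hyq⟩ := h
  obtain ⟨hd', hx0', hxp', hy0', hyq'⟩ := h'
  have hq : 0 < q := lt_of_lt_of_le hy0 hyq
  have hcop : IsCoprime q p := ⟨-x, y, by linarith⟩
  have hdvd : q ∣ (y - y') := by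
    apply hcop.dvd_of_dvd_mul_left
    have : p * (y - y') = q * (x - x') := by ring_nf; linarith
    exact ⟨x - x', this⟩
  obtain ⟨t, ht⟩ := hdvd
  have ht0 : t = 0 := by
    rcases lt_trichotomy t 0 with h | h | h
    · nlinarith
    · exact h
    · nlinarith
  have hyy : y = y' := by rw [ht0] at ht; linarith
  constructor
  · have : q * (x - x') = 0 := by nlinarith
    have := mul_eq_zero.mp this
    rcases this with h | h
    · omega
    · linarith
  · exact hyy

lemma sum_Icc_shift (n : ℕ) (hn : 1 ≤ n) (g : ℕ → ℤ) :
    ∑ i ∈ Finset.Icc 1 n, g i = g 1 + ∑ i ∈ Finset.Icc 1 (n-1), g (i+1) := by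
  have h2 : Finset.Icc 2 n = (Finset.Icc 1 (n-1)).image (· + 1) := by
    ext x; simp only [Finset.mem_Icc, Finset.mem_image]
    constructor
    · intro hx; exact ⟨x - 1, by omega, by omega⟩
    · rintro ⟨y, hy, rfl⟩; omega
  have h1 : Finset.Icc 1 n = insert 1 (Finset.Icc 2 n) := by
    ext x; simp only [Finset.mem_Icc, Finset.mem_insert]; omega
  rw [h1, Finset.sum_insert (by simp), h2,
    Finset.sum_image (by intro x _ y _ h; simp only at h; omega)]




/-- Explicit description of the set of signed sums for the state `(j, c)`. -/
def ES (a : ℕ → ℤ) (j c : ℕ) : Set ℤ :=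
  {s | ∃ t : ℕ → ℕ, (∀ l < j, (t l : ℤ) ≤ a l - 2) ∧ ((t j : ℤ) ≤ (c : ℤ) - 1) ∧
    s = ((c : ℤ) - 1 - 2 * t j) * cnU a (j+1)
      + ∑ l ∈ Finset.range j, (a l - 2 - 2 * t l) * cnU a (l+1)}


lemma sum_update_ne (t : ℕ → ℕ) (j m v : ℕ) (hm : m ≤ j) :
    ∑ l ∈ Finset.range m, (a l - 2 - 2 * (Function.update t j v l : ℤ)) * cnU a (l+1)
      = ∑ l ∈ Finset.range m, (a l - 2 - 2 * (t l : ℤ)) * cnU a (l+1) := by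
  apply Finset.sum_congr rfl
  intro l hl
  have : l ≠ j := by have := Finset.mem_range.mp hl; omega
  rw [Function.update_of_ne this]

lemma ES_base : ES a 0 1 = {0} := by
  ext x
  simp only [ES, Set.mem_setOf_eq, Set.mem_singleton_iff]
  constructor
  · rintro ⟨t, -, ht0, rfl⟩
    have : t 0 = 0 := by omega
    simp [this]
  · rintro rfl
    exact ⟨fun _ => 0, by omega, by norm_num, by simp⟩

lemma ES_collapse (ha : ∀ l, 2 ≤ a l) (j : ℕ) :
    ES a (j+1) 1 = ES a j (a j - 1).toNat := by
  have haj := ha j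
  ext x
  simp only [ES, Set.mem_setOf_eq]
  constructor
  · rintro ⟨t, hlt, htop, rfl⟩
    have htop0 : t (j+1) = 0 := by omega
    refine ⟨t, fun l hl => hlt l (by omega), by have := hlt j (by omega); omega, ?_⟩
    rw [htop0, Finset.sum_range_succ]
    have hcast : (((a j - 1).toNat : ℤ)) = a j - 1 := by omega
    rw [hcast]
    push_cast
    ring
  · rintro ⟨t, hlt, htop, rfl⟩
    refine ⟨Function.update t (j+1) 0, ?_, by simp, ?_⟩
    · intro l hl
      rw [Function.update_of_ne (by omega)]
      rcases Nat.lt_succ_iff_lt_or_eq.mp hl with h | h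
      · exact hlt l h
      · subst h; omega
    · rw [Function.update_self, Finset.sum_range_succ,
        Function.update_of_ne (by omega : j ≠ j + 1), sum_update_ne t (j+1) j 0 (by omega)]
      have hcast : (((a j - 1).toNat : ℤ)) = a j - 1 := by omega
      rw [hcast] at htop ⊢
      push_cast
      ring

lemma ES_succ (j c : ℕ) (hc : 1 ≤ c) :
    ES a j (c+1) = {x | ∃ e s, (e = (1:ℤ) ∨ e = -1) ∧ s ∈ ES a j c ∧
      x = e * cnU a (j+1) + s} := by
  ext x
  simp only [ES, Set.mem_setOf_eq]
  constructor
  · rintro ⟨t, hlt, htop, rfl⟩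
    rcases le_or_gt ((t j : ℤ)) ((c:ℤ) - 1) with h | h
    · refine ⟨1, _, Or.inl rfl, ⟨t, hlt, h, rfl⟩, ?_⟩
      push_cast
      ring
    · have hj : (t j : ℤ) = c := by push_cast at htop; omega
      refine ⟨-1, _, Or.inr rfl, ⟨Function.update t j (c - 1), ?_, ?_, rfl⟩, ?_⟩
      · intro l hl; rw [Function.update_of_ne (by omega)]; exact hlt l hl
      · rw [Function.update_self]; push_cast; omega
      · rw [Function.update_self, sum_update_ne t j j (c-1) le_rfl]
        have hc1 : ((c - 1 : ℕ) : ℤ) = (c : ℤ) - 1 := by omega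
        rw [hc1, hj]
        push_cast
        ring
  · rintro ⟨e, s, he, ⟨t, hlt, htop, rfl⟩, rfl⟩
    rcases he with rfl | rfl
    · refine ⟨t, hlt, by push_cast; omega, by push_cast; ring⟩
    · refine ⟨Function.update t j (t j + 1), ?_, ?_, ?_⟩
      · intro l hl; rw [Function.update_of_ne (by omega)]; exact hlt l hl
      · rw [Function.update_self]; push_cast; omega
      · rw [Function.update_self, sum_update_ne t j j (t j + 1) le_rfl]
        push_cast
        ring






section count

variable (a) in
/-- bounds for the parametrization -/
def esB (j c : ℕ) (l : ℕ) : ℕ := if l = j then c else (a l - 1).toNat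

variable (a) in
/-- extend a dependent tuple to `ℕ → ℕ` -/
def tt (j : ℕ) (t : ∀ l : Fin (j+1), Fin (esB a j c l)) : ℕ → ℕ :=
  fun l => if h : l < j+1 then (t ⟨l, h⟩ : ℕ) else 0

variable (a) in
def esF (j c : ℕ) (t : ∀ l : Fin (j+1), Fin (esB a j c l)) : ℤ :=
  ∑ i ∈ Finset.range (j+1),
    ((if i = j then (c : ℤ) - 1 else a i - 2) - 2 * (tt a j t i : ℤ)) * cnU a (i+1)

lemma esF_val (j c : ℕ) (t : ∀ l : Fin (j+1), Fin (esB a j c l)) :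
    esF a j c t = ((c:ℤ) - 1 - 2 * (tt a j t j : ℤ)) * cnU a (j+1)
      + ∑ l ∈ Finset.range j, (a l - 2 - 2 * (tt a j t l : ℤ)) * cnU a (l+1) := by
  rw [esF, Finset.sum_range_succ, if_pos rfl]
  rw [add_comm]
  congr 1
  apply Finset.sum_congr rfl
  intro l hl
  rw [if_neg (by have := Finset.mem_range.mp hl; omega)]

lemma esF_inj (ha : ∀ l, 2 ≤ a l) (j c : ℕ) :
    Function.Injective (esF a j c) := by
  intro t t' heq
  set f : ℕ → ℤ := fun l => (tt a j t' l : ℤ) - (tt a j t l : ℤ) with hf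
  have hsum : ∑ l ∈ Finset.range (j+1), 2 * f l * cnU a (l+1) = 0 := by
    have : esF a j c t - esF a j c t' = ∑ l ∈ Finset.range (j+1), 2 * f l * cnU a (l+1) := by
      rw [esF, esF, ← Finset.sum_sub_distrib]
      apply Finset.sum_congr rfl
      intro l _
      simp only [hf]
      ring
    rw [heq] at this
    simp at this
    linarith [this]
  have hbd : ∀ l < j, |f l| ≤ a l - 2 := by
    intro l hl
    have hal := ha l
    have h1 : tt a j t l < esB a j c l := by
      rw [tt, dif_pos (by omega)]
      exact (t ⟨l, by omega⟩).2
    have h2 : tt a j t' l < esB a j c l := by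
      rw [tt, dif_pos (by omega)]
      exact (t' ⟨l, by omega⟩).2
    rw [esB, if_neg (by omega)] at h1 h2
    rw [abs_le]
    constructor <;> simp only [hf] <;> omega
  have hzero := cnZero ha j f hbd hsum
  funext l
  have hl := l.2
  have := hzero l.1 (by omega)
  simp only [hf] at this
  have htt : tt a j t l.1 = tt a j t' l.1 := by omega
  rw [tt, tt, dif_pos l.2, dif_pos l.2] at htt
  exact Fin.ext (by simpa using htt)

lemma ES_eq_image (ha : ∀ l, 2 ≤ a l) (j c : ℕ) (hc : 1 ≤ c) :
    ES a j c = ↑(Finset.image (esF a j c) Finset.univ) := by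
  ext x
  simp only [ES, Set.mem_setOf_eq, Finset.coe_image, Finset.coe_univ, Set.image_univ,
    Set.mem_range]
  constructor
  · rintro ⟨t, hlt, htop, rfl⟩
    have hbd : ∀ l : Fin (j+1), t l.1 < esB a j c l.1 := by
      intro l
      rw [esB]
      rcases eq_or_ne (l.1) j with h | h
      · rw [if_pos h, h]; omega
      · rw [if_neg h]
        have := hlt l.1 (by have := l.2; omega)
        have := ha l.1
        omega
    refine ⟨fun l => ⟨t l.1, hbd l⟩, ?_⟩
    rw [esF_val]
    have httl : ∀ l, l < j + 1 → tt a j (fun l => (⟨t l.1, hbd l⟩ : Fin (esB a j c l.1))) l = t l := by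
      intro l hl
      rw [tt, dif_pos hl]
    rw [httl j (by omega)]
    congr 1
    apply Finset.sum_congr rfl
    intro l hl
    rw [httl l (by have := Finset.mem_range.mp hl; omega)]
  · rintro ⟨t, rfl⟩
    refine ⟨tt a j t, ?_, ?_, ?_⟩
    · intro l hl
      have h1 : tt a j t l < esB a j c l := by
        rw [tt, dif_pos (by omega)]
        exact (t ⟨l, by omega⟩).2
      rw [esB, if_neg (by omega)] at h1
      have := ha l
      omega
    · have h1 : tt a j t j < esB a j c j := by
        rw [tt, dif_pos (by omega)]
        exact (t ⟨j, by omega⟩).2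
      rw [esB, if_pos rfl] at h1
      omega
    · rw [esF_val]

lemma ES_ncard (ha : ∀ l, 2 ≤ a l) (j c : ℕ) (hc : 1 ≤ c) :
    (ES a j c).ncard = c * ∏ l ∈ Finset.range j, (a l - 1).toNat := by
  rw [ES_eq_image ha j c hc, Set.ncard_coe_finset,
    Finset.card_image_of_injective _ (esF_inj ha j c), Finset.card_univ]
  rw [Fintype.card_pi]
  simp only [Fintype.card_fin]
  rw [Fin.prod_univ_eq_prod_range (fun l => esB a j c l) (j+1), Finset.prod_range_succ]
  rw [esB, if_pos rfl, mul_comm]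
  congr 1
  apply Finset.prod_congr rfl
  intro l hl
  rw [esB, if_neg (by have := Finset.mem_range.mp hl; omega)]

end count






def SumSet (n : ℕ) (d : ℕ → ℤ) : Set ℤ :=
  {s : ℤ | ∃ ε : ℕ → ℤ,
        (∀ i ∈ Finset.Icc 1 n, ε i = 1 ∨ ε i = -1) ∧
        s = ∑ i ∈ Finset.Icc 1 n, ε i * d i}



/-- The statement proved by induction over the chain. -/
def CoreStmt (a : ℕ → ℤ) (j c : ℕ) : Prop :=
  ∀ n : ℕ, ∀ P : ℕ → ℤ × ℤ,
    IsBezoutChain ((c:ℤ) * cnU a (j+1) - cnU a j) ((c:ℤ) * cnV a (j+1) - cnV a j) n P →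
    ∀ d : ℕ → ℤ, (∀ i, 1 ≤ i → i ≤ n → d i = (P (i - 1)).1 - (P i).1) →
    SumSet n d = ES a j c

lemma core_step (ha : ∀ l, 2 ≤ a l) (j c : ℕ) (hc : 1 ≤ c)
    (IH : CoreStmt a j c) : CoreStmt a j (c+1) := by
  intro n P hch d hd
  obtain ⟨hP0, hPn, hne, hstep⟩ := hch
  have hU := cnU_mono ha j
  have hV := cnV_mono ha j
  have hW := cnW_mono ha j
  have hcz : (1:ℤ) ≤ (c:ℤ) := by exact_mod_cast hc
  set U := cnU a j with hUdef
  set U' := cnU a (j+1) with hU'def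
  set V := cnV a j with hVdef
  set V' := cnV a (j+1) with hV'def
  set p : ℤ := ((c:ℕ)+1 : ℕ) * U' - U with hpdef
  -- the given p, q in the chain
  have hpq : ((((c:ℕ)+1 : ℕ) : ℤ) * cnU a (j+1) - cnU a j)
      - ((((c:ℕ)+1 : ℕ) : ℤ) * cnV a (j+1) - cnV a j)
      = ((c:ℤ)+1) * (U' - V') - (U - V) := by push_cast; ring
  have hWpos : 1 ≤ U' - V' := le_trans hW.1 hW.2
  have hgt : (((c:ℕ)+1 : ℕ) : ℤ) * cnU a (j+1) - cnU a j
      > (((c:ℕ)+1 : ℕ) : ℤ) * cnV a (j+1) - cnV a j := by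
    push_cast
    nlinarith [hW.1, hW.2]
  -- n ≥ 1
  have hn1 : 1 ≤ n := by
    by_contra h
    have hn0 : n = 0 := by omega
    rw [hn0] at hPn
    rw [hPn] at hP0
    have h1 : (1:ℤ) = (((c:ℕ)+1 : ℕ) : ℤ) * cnU a (j+1) - cnU a j := congrArg Prod.fst hP0
    have h2 : (1:ℤ) = (((c:ℕ)+1 : ℕ) : ℤ) * cnV a (j+1) - cnV a j := congrArg Prod.snd hP0
    rw [← h1, ← h2] at hgt
    exact lt_irrefl _ hgt
  -- the successor
  have hb1 : BezoutNext (((c:ℕ)+1 : ℕ) * cnU a (j+1) - cnU a j)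
      (((c:ℕ)+1 : ℕ) * cnV a (j+1) - cnV a j) (P 1).1 (P 1).2 := by
    have := hstep 0 (by omega)
    rw [hP0] at this
    exact this
  have hb2 : BezoutNext (((c:ℕ)+1 : ℕ) * cnU a (j+1) - cnU a j)
      (((c:ℕ)+1 : ℕ) * cnV a (j+1) - cnV a j)
      ((c:ℤ) * cnU a (j+1) - cnU a j) ((c:ℤ) * cnV a (j+1) - cnV a j) := by
    refine ⟨?_, ?_, ?_, ?_, ?_⟩
    · have hdet := cnDet (a := a) j
      push_cast
      linear_combination hdet
    · nlinarith [hU.1, hU.2]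
    · push_cast; nlinarith [hU.1, hU.2]
    · have hV'0 : 0 ≤ V' := by omega
      nlinarith [hV.1, hV.2]
    · push_cast; nlinarith [hV.1, hV.2]
  have hP1 : P 1 = ((c:ℤ) * cnU a (j+1) - cnU a j, (c:ℤ) * cnV a (j+1) - cnV a j) := by
    have := bezout_unique hb1 hb2
    exact Prod.ext this.1 this.2
  -- shifted chain
  have hch' : IsBezoutChain ((c:ℤ) * cnU a (j+1) - cnU a j)
      ((c:ℤ) * cnV a (j+1) - cnV a j) (n-1) (fun i => P (i+1)) := by
    refine ⟨hP1, ?_, ?_, ?_⟩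
    · show P (n-1+1) = (1,1)
      rw [show n-1+1 = n by omega]
      exact hPn
    · intro i hi
      exact hne (i+1) (by omega)
    · intro i hi
      exact hstep (i+1) (by omega)
  have hd' : ∀ i, 1 ≤ i → i ≤ n-1 → (fun i => d (i+1)) i
      = ((fun i => P (i+1)) (i-1)).1 - ((fun i => P (i+1)) i).1 := by
    intro i h1 h2
    show d (i+1) = (P (i-1+1)).1 - (P (i+1)).1
    rw [show i-1+1 = i by omega]
    exact hd (i+1) (by omega) (by omega)
  have hIH := IH (n-1) (fun i => P (i+1)) hch' (fun i => d (i+1)) hd'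
  -- d 1 = U'
  have hd1 : d 1 = cnU a (j+1) := by
    rw [hd 1 (by omega) (by omega)]
    rw [show (1:ℕ)-1 = 0 from rfl, hP0, hP1]
    show (((c:ℕ)+1 : ℕ) : ℤ) * cnU a (j+1) - cnU a j - ((c:ℤ) * cnU a (j+1) - cnU a j) = _
    push_cast
    ring
  -- final set identity
  rw [ES_succ j c hc, ← hIH]
  ext x
  simp only [SumSet, Set.mem_setOf_eq]
  constructor
  · rintro ⟨ε, hεv, rfl⟩
    refine ⟨ε 1, _, hεv 1 (by simp [Finset.mem_Icc]; omega), ⟨fun i => ε (i+1), ?_, rfl⟩, ?_⟩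
    · intro i hi
      have := Finset.mem_Icc.mp hi
      exact hεv (i+1) (Finset.mem_Icc.mpr (by omega))
    · rw [sum_Icc_shift n hn1 (fun i => ε i * d i), hd1]
  · rintro ⟨e, s, he, ⟨ε', hεv', rfl⟩, rfl⟩
    refine ⟨fun i => if i = 1 then e else ε' (i-1), ?_, ?_⟩
    · intro i hi
      have hm := Finset.mem_Icc.mp hi
      beta_reduce
      rcases eq_or_ne i 1 with h | h
      · rw [if_pos h]; exact he
      · rw [if_neg h]
        exact hεv' (i-1) (Finset.mem_Icc.mpr (by omega))
    · rw [sum_Icc_shift n hn1]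
      beta_reduce
      rw [if_pos rfl, hd1]
      congr 1
      apply Finset.sum_congr rfl
      intro i hi
      have hm := Finset.mem_Icc.mp hi
      rw [if_neg (by omega)]
      congr 1

lemma core (ha : ∀ l, 2 ≤ a l) : ∀ j c : ℕ, 1 ≤ c → CoreStmt a j c := by
  intro j
  induction j with
  | zero =>
    intro c
    induction c with
    | zero => omega
    | succ c ihc =>
      intro _
      rcases Nat.eq_zero_or_pos c with rfl | hc
      · -- base case : state (0,1), p = q = 1
        intro n P hch d hd
        obtain ⟨hP0, hPn, hne, hstep⟩ := hch
        have hn0 : n = 0 := by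
          by_contra h
          apply hne 0 (by omega)
          rw [hP0]
          norm_num [cnU, cnV]
        subst hn0
        rw [ES_base]
        ext x
        simp only [SumSet, Set.mem_setOf_eq, Set.mem_singleton_iff]
        constructor
        · rintro ⟨ε, -, rfl⟩
          simp
        · rintro rfl
          exact ⟨fun _ => 1, by simp, by simp⟩
      · exact core_step ha 0 c hc (ihc hc)
  | succ j ihj =>
    intro c
    induction c with
    | zero => omega
    | succ c ihc =>
      intro _
      rcases Nat.eq_zero_or_pos c with rfl | hc
      · -- collapse case : state (j+1, 1) equals state (j, a j - 1)
        intro n P hch d hd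
        have hcast : (((a j - 1).toNat : ℤ)) = a j - 1 := by have := ha j; omega
        have hch' : IsBezoutChain (((a j - 1).toNat : ℤ) * cnU a (j+1) - cnU a j)
            (((a j - 1).toNat : ℤ) * cnV a (j+1) - cnV a j) n P := by
          have e1 : ((1:ℕ) : ℤ) * cnU a (j+2) - cnU a (j+1)
              = ((a j - 1).toNat : ℤ) * cnU a (j+1) - cnU a j := by
            rw [hcast]
            show (1:ℤ) * (a j * cnU a (j+1) - cnU a j) - cnU a (j+1) = _
            ring
          have e2 : ((1:ℕ) : ℤ) * cnV a (j+2) - cnV a (j+1)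
              = ((a j - 1).toNat : ℤ) * cnV a (j+1) - cnV a j := by
            rw [hcast]
            show (1:ℤ) * (a j * cnV a (j+1) - cnV a j) - cnV a (j+1) = _
            ring
          rw [← e1, ← e2]
          exact hch
        have := ihj ((a j - 1).toNat) (by have := ha j; omega) n P hch' d hd
        rw [this, ES_collapse ha j]
      · exact core_step ha (j+1) c hc (ihc hc)


end Stmt10Aux

open Stmt10Aux in
/-- With `dᵢ = p_{i−1} − pᵢ` along the Bezout chain of `(p, q)` and
`[r₀, …, r_k]⁻ = −p/q` with all `rᵢ ≤ −2`: the number of distinct integers of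
the form `Σ_{i=1}^{n} εᵢ dᵢ`, over all sign choices `ε : {1, …, n} → {±1}`,
equals `|(r₀ + 1)(r₁ + 1) ⋯ (r_{k−1} + 1) · r_k|`. -/
theorem stmt10 (p q : ℤ) (hq : 0 < q) (hqp : q < p) (hco : Int.gcd p q = 1)
    (n : ℕ) (P : ℕ → ℤ × ℤ) (hchain : IsBezoutChain p q n P)
    (d : ℕ → ℤ) (hd : ∀ i, 1 ≤ i → i ≤ n → d i = (P (i - 1)).1 - (P i).1)
    (k : ℕ) (r : ℕ → ℤ) (hr : ∀ i ≤ k, r i ≤ -2)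
    (hval : ncf (List.ofFn fun i : Fin (k + 1) => r i.1) = -(p : ℚ) / (q : ℚ)) :
    Set.ncard {s : ℤ | ∃ ε : ℕ → ℤ,
        (∀ i ∈ Finset.Icc 1 n, ε i = 1 ∨ ε i = -1) ∧
        s = ∑ i ∈ Finset.Icc 1 n, ε i * d i}
      = ((∏ i ∈ Finset.range k, (r i + 1)) * r k).natAbs := by

  classical
  set a : ℕ → ℤ := fun l => if l ≤ k then -(r l) else 2 with hadef
  have ha : ∀ l, 2 ≤ a l := by
    intro l
    show (2:ℤ) ≤ if l ≤ k then -(r l) else 2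
    split
    · next h => have := hr l h; omega
    · exact le_refl 2
  have har : ∀ i ≤ k, a i = - r i := by
    intro i hi
    show (if i ≤ k then -(r i) else 2) = - r i
    rw [if_pos hi]
  have hvalU := cnVal k r a ha har
  rw [hval] at hvalU
  have hUpos : 0 < cnU a (k+2) :=
    lt_of_le_of_lt (cnU_mono ha (k+1)).1 (cnU_mono ha (k+1)).2
  have hVpos : 0 < cnV a (k+2) := by
    have h1 := (cnV_mono ha (k+1)).2
    have h0 := (cnV_mono ha k).1
    have h0' := (cnV_mono ha k).2
    have : (0:ℤ) ≤ cnV a (k+1) := by omega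
    exact lt_of_le_of_lt this h1
  -- cross-multiplied identity over ℤ
  have hcross : p * cnV a (k+2) = cnU a (k+2) * q := by
    have hqQ : ((q:ℚ)) ≠ 0 := by positivity
    have hVQ : ((cnV a (k+2) : ℤ) : ℚ) ≠ 0 := by exact_mod_cast hVpos.ne'
    field_simp at hvalU
    have h2 : ((p * cnV a (k+2) : ℤ) : ℚ) = ((cnU a (k+2) * q : ℤ) : ℚ) := by
      push_cast; linarith
    exact_mod_cast h2
  have hcopUV : IsCoprime (cnU a (k+2)) (cnV a (k+2)) := by
    have hdet := cnDet (a := a) (k+1)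
    exact ⟨-cnV a (k+1), cnU a (k+1), by linarith⟩
  have hcoppq : IsCoprime p q := Int.isCoprime_iff_gcd_eq_one.mpr hco
  have hpU : p = cnU a (k+2) := by
    apply Int.dvd_antisymm (by omega) (by omega)
    · exact hcoppq.dvd_of_dvd_mul_right ⟨cnV a (k+2), hcross.symm⟩
    · exact hcopUV.dvd_of_dvd_mul_right ⟨q, hcross⟩
  have hqV : q = cnV a (k+2) := by
    have : p * cnV a (k+2) = p * q := by rw [hcross, hpU]
    have hp0 : p ≠ 0 := by omega
    have := mul_left_cancel₀ hp0 this
    omega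
  set c : ℕ := (a k).toNat with hcdef
  have hc1 : 1 ≤ c := by have := ha k; omega
  have hcast : ((c:ℕ) : ℤ) = a k := by have := ha k; omega
  have hp' : p = (c:ℤ) * cnU a (k+1) - cnU a k := by
    rw [hpU, hcast]
    show cnU a (k+2) = _
    rfl
  have hq' : q = (c:ℤ) * cnV a (k+1) - cnV a k := by
    rw [hqV, hcast]
    show cnV a (k+2) = _
    rfl
  rw [hp', hq'] at hchain
  have hsets : SumSet n d = ES a k c := core ha k c hc1 n P hchain d hd
  have hgoal : {s : ℤ | ∃ ε : ℕ → ℤ,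
        (∀ i ∈ Finset.Icc 1 n, ε i = 1 ∨ ε i = -1) ∧
        s = ∑ i ∈ Finset.Icc 1 n, ε i * d i} = SumSet n d := rfl
  rw [hgoal, hsets, ES_ncard ha k c hc1]
  -- final arithmetic
  have hprod : ((∏ i ∈ Finset.range k, (r i + 1)).natAbs)
      = ∏ i ∈ Finset.range k, (a i - 1).toNat := by
    rw [show (∏ i ∈ Finset.range k, (r i + 1)).natAbs
        = ∏ i ∈ Finset.range k, (r i + 1).natAbs from
      map_prod Int.natAbsHom _ _]
    apply Finset.prod_congr rfl
    intro i hi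
    have hik : i ≤ k := by have := Finset.mem_range.mp hi; omega
    have := har i hik
    have := hr i hik
    omega
  rw [Int.natAbs_mul, hprod]
  have hrk : (r k).natAbs = c := by
    have := har k le_rfl
    have := hr k le_rfl
    omega
  rw [hrk]
  ring
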